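/- Let κ > 0 and c ∈ ℝ with c ≠ κ², and set A = κ(c − κ²), E = (c − κ²)(c + 3κ²). Let μ : ℝ → ℝ be twice continuously differentiable with μ(x) > 0 for all x and satisfying (μ')² = (1/4)·μ² − (E/(2A²))·μ⁴ + (4/A)·μ⁵ + (E²/(4A⁴) − 4c/A²)·μ⁶ everywhere. Then for all x, G₂(μ)(x)·μ'(x) = [(c + 3κ²)/(2κ²(c − κ²))]·G₁(μ)(x)·μ'(x), where G₁(μ) = 1/κ² − 1/μ² and G₂(μ) = −2μ''/μ⁵ + 5(μ')²/μ⁶ − 3/(4μ⁴) + 3/(4κ⁴). -/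

import Mathlib

set_option maxHeartbeats 2000000 in
/-- the single-soliton variational identity
`G₂(μ)·μ' = ω₁(c)·G₁(μ)·μ'` with `ω₁(c) = (c+3κ²)/(2κ²(c−κ²))`, for a positive
solution `μ` of the first-order soliton ODE. -/
theorem G2_eq_omega1_G1 (κ c : ℝ) (hκ : 0 < κ) (hc : c ≠ κ ^ 2)
    (A E : ℝ) (hA : A = κ * (c - κ ^ 2)) (hE : E = (c - κ ^ 2) * (c + 3 * κ ^ 2))
    (μ : ℝ → ℝ) (hμ : ContDiff ℝ 2 μ) (hpos : ∀ x, 0 < μ x)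
    (hODE : ∀ x, (deriv μ x) ^ 2
      = (1 / 4) * (μ x) ^ 2 - (E / (2 * A ^ 2)) * (μ x) ^ 4
        + (4 / A) * (μ x) ^ 5 + (E ^ 2 / (4 * A ^ 4) - 4 * c / A ^ 2) * (μ x) ^ 6) :
    ∀ x,
      (-2 * deriv (deriv μ) x / (μ x) ^ 5 + 5 * (deriv μ x) ^ 2 / (μ x) ^ 6
          - 3 / (4 * (μ x) ^ 4) + 3 / (4 * κ ^ 4)) * deriv μ x
        = ((c + 3 * κ ^ 2) / (2 * κ ^ 2 * (c - κ ^ 2)))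
            * (1 / κ ^ 2 - 1 / (μ x) ^ 2) * deriv μ x := by
  have hκ0 : κ ≠ 0 := ne_of_gt hκ
  have hcκ : c - κ ^ 2 ≠ 0 := sub_ne_zero.mpr hc
  have hA0 : A ≠ 0 := by rw [hA]; exact mul_ne_zero hκ0 hcκ
  -- μ' is differentiable
  have hd : Differentiable ℝ μ := hμ.differentiable (by norm_num)
  have hμ' : ContDiff ℝ (1 + 1) μ := by exact_mod_cast hμ
  have hd2 : Differentiable ℝ (deriv μ) :=
    (contDiff_succ_iff_deriv.mp hμ').2.2.differentiable (by norm_num)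
  intro x
  set m := μ x with hm
  set m' := deriv μ x with hm'
  set m'' := deriv (deriv μ) x with hm''
  have hm0 : m ≠ 0 := ne_of_gt (hpos x)
  -- derivative of both sides of the ODE
  have hder1 : HasDerivAt (fun y => (deriv μ y) ^ 2) (2 * m' * m'') x := by
    have := ((hd2 x).hasDerivAt).fun_pow 2
    simpa [hm', hm'', mul_comm, mul_assoc, mul_left_comm] using this
  have hder2 : HasDerivAt
      (fun y => (1 / 4) * (μ y) ^ 2 - (E / (2 * A ^ 2)) * (μ y) ^ 4
        + (4 / A) * (μ y) ^ 5 + (E ^ 2 / (4 * A ^ 4) - 4 * c / A ^ 2) * (μ y) ^ 6)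
      (((1 / 4) * (2 * m) - (E / (2 * A ^ 2)) * (4 * m ^ 3)
        + (4 / A) * (5 * m ^ 4)
        + (E ^ 2 / (4 * A ^ 4) - 4 * c / A ^ 2) * (6 * m ^ 5)) * m') x := by
    have hx := (hd x).hasDerivAt
    have h2' := (hx.fun_pow 2).const_mul (1 / 4 : ℝ)
    have h4' := (hx.fun_pow 4).const_mul (E / (2 * A ^ 2))
    have h5' := (hx.fun_pow 5).const_mul (4 / A)
    have h6' := (hx.fun_pow 6).const_mul (E ^ 2 / (4 * A ^ 4) - 4 * c / A ^ 2)
    have := ((h2'.fun_sub h4').fun_add h5').fun_add h6'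
    refine this.congr_deriv ?_
    simp [hm, hm']
    ring
  have hfun : (fun y => (deriv μ y) ^ 2)
      = (fun y => (1 / 4) * (μ y) ^ 2 - (E / (2 * A ^ 2)) * (μ y) ^ 4
        + (4 / A) * (μ y) ^ 5 + (E ^ 2 / (4 * A ^ 4) - 4 * c / A ^ 2) * (μ y) ^ 6) :=
    funext hODE
  have keq : 2 * m' * m'' =
      ((1 / 4) * (2 * m) - (E / (2 * A ^ 2)) * (4 * m ^ 3)
        + (4 / A) * (5 * m ^ 4)
        + (E ^ 2 / (4 * A ^ 4) - 4 * c / A ^ 2) * (6 * m ^ 5)) * m' := by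
    have := hder1
    rw [hfun] at this
    exact this.unique hder2
  by_cases hm'0 : m' = 0
  · simp [hm'0]
  · -- cancel m' in keq to get an expression for 2 m''
    have h2m : 2 * m'' =
        (1 / 4) * (2 * m) - (E / (2 * A ^ 2)) * (4 * m ^ 3)
        + (4 / A) * (5 * m ^ 4)
        + (E ^ 2 / (4 * A ^ 4) - 4 * c / A ^ 2) * (6 * m ^ 5) := by
      refine mul_right_cancel₀ hm'0 ?_
      calc 2 * m'' * m' = 2 * m' * m'' := by ring
        _ = _ := keq
    have hsq := hODE x
    rw [← hm, ← hm'] at hsq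
    -- now pure algebra
    have hAE : E / A ^ 2 = (c + 3 * κ ^ 2) / (κ ^ 2 * (c - κ ^ 2)) := by
      rw [hA, hE]; field_simp
    -- substitute
    have key : -2 * m'' / m ^ 5 + 5 * m' ^ 2 / m ^ 6 - 3 / (4 * m ^ 4) + 3 / (4 * κ ^ 4)
        = (c + 3 * κ ^ 2) / (2 * κ ^ 2 * (c - κ ^ 2)) * (1 / κ ^ 2 - 1 / m ^ 2) := by
      have hE' : E = (c - κ ^ 2) * (c + 3 * κ ^ 2) := hE
      have hA' : A = κ * (c - κ ^ 2) := hA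
      have hm''eq : m'' = ((1 / 4) * (2 * m) - (E / (2 * A ^ 2)) * (4 * m ^ 3)
        + (4 / A) * (5 * m ^ 4)
        + (E ^ 2 / (4 * A ^ 4) - 4 * c / A ^ 2) * (6 * m ^ 5)) / 2 := by
        linarith [h2m]
      rw [hm''eq, hsq, hA', hE']
      have hκ2 : κ ^ 2 ≠ 0 := pow_ne_zero 2 hκ0
      field_simp
      ring
    rw [key]
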